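/- Let E be a real normed vector space, let k > 0, and let u : ℝ → E be three times continuously differentiable on [0,k]. Then ‖(2/k)·((u(k) − u(0))/k − u'(0)) − (u''(0) + u''(k))/2‖² ≤ (9/4) k² · sup_{s ∈ [0,k]} ‖u'''(s)‖². -/

import Mathlib

open Set

/-- Derivative within `Icc` gives right-derivative within `Ici` at interior-left points. -/
lemma hasDerivWithinAt_Ici_of_Icc {E : Type*} [NormedAddCommGroup E] [NormedSpace ℝ E]
    {k : ℝ} {f f' : ℝ → E}
    (hf : ∀ t ∈ Set.Icc (0 : ℝ) k, HasDerivWithinAt f (f' t) (Set.Icc (0 : ℝ) k) t) :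
    ∀ x ∈ Set.Ico (0 : ℝ) k, HasDerivWithinAt f (f' x) (Set.Ici x) x := by
  intro x hx
  have h1 : Set.Icc x k ∈ nhdsWithin x (Set.Ici x) :=
    Icc_mem_nhdsGE_of_mem ⟨le_refl x, hx.2⟩
  have h2 : Set.Icc (0 : ℝ) k ∈ nhdsWithin x (Set.Ici x) :=
    Filter.mem_of_superset h1 (Set.Icc_subset_Icc_left hx.1)
  exact (hf x ⟨hx.1, hx.2.le⟩).mono_of_mem_nhdsWithin h2

/-- Truncation error bound for the initial-step approximation `R⁰`. -/
theorem truncation_error_initial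
    {E : Type*} [NormedAddCommGroup E] [NormedSpace ℝ E]
    (k : ℝ) (hk : 0 < k) (u u' u'' u''' : ℝ → E)
    (hu' : ∀ t ∈ Set.Icc (0 : ℝ) k, HasDerivWithinAt u (u' t) (Set.Icc (0 : ℝ) k) t)
    (hu'' : ∀ t ∈ Set.Icc (0 : ℝ) k, HasDerivWithinAt u' (u'' t) (Set.Icc (0 : ℝ) k) t)
    (hu''' : ∀ t ∈ Set.Icc (0 : ℝ) k, HasDerivWithinAt u'' (u''' t) (Set.Icc (0 : ℝ) k) t)
    (hcont : ContinuousOn u''' (Set.Icc (0 : ℝ) k)) :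
    ‖(2 / k) • ((1 / k) • (u k - u 0) - u' 0) - (1 / 2 : ℝ) • (u'' 0 + u'' k)‖ ^ 2
      ≤ (9 / 4) * k ^ 2 * ⨆ s : Set.Icc (0 : ℝ) k, ‖u''' ↑s‖ ^ 2 := by
  set S : ℝ := ⨆ s : Set.Icc (0 : ℝ) k, ‖u''' ↑s‖ ^ 2 with hS
  have h0mem : (0 : ℝ) ∈ Set.Icc (0 : ℝ) k := ⟨le_refl 0, hk.le⟩
  have hkmem : k ∈ Set.Icc (0 : ℝ) k := ⟨hk.le, le_refl k⟩
  have hbdd : BddAbove (Set.range fun s : Set.Icc (0 : ℝ) k => ‖u''' ↑s‖ ^ 2) := by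
    have hc : Continuous fun s : Set.Icc (0 : ℝ) k => ‖u''' ↑s‖ ^ 2 := by
      have := hcont.restrict
      continuity
    exact (isCompact_range hc).bddAbove
  have hSle : ∀ s ∈ Set.Icc (0 : ℝ) k, ‖u''' s‖ ^ 2 ≤ S := by
    intro s hs
    exact le_ciSup hbdd (⟨s, hs⟩ : Set.Icc (0 : ℝ) k)
  have hS0 : 0 ≤ S := le_trans (sq_nonneg _) (hSle 0 h0mem)
  set M : ℝ := Real.sqrt S with hMdef
  have hM0 : 0 ≤ M := Real.sqrt_nonneg S
  have hM2 : M ^ 2 = S := Real.sq_sqrt hS0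
  have hMle : ∀ s ∈ Set.Icc (0 : ℝ) k, ‖u''' s‖ ≤ M := by
    intro s hs
    have := hSle s hs
    nlinarith [norm_nonneg (u''' s), Real.sqrt_nonneg S]
  -- continuity of u, u', u''
  have hcu : ContinuousOn u (Set.Icc (0 : ℝ) k) :=
    fun t ht => (hu' t ht).continuousWithinAt
  have hcu' : ContinuousOn u' (Set.Icc (0 : ℝ) k) :=
    fun t ht => (hu'' t ht).continuousWithinAt
  have hcu'' : ContinuousOn u'' (Set.Icc (0 : ℝ) k) :=
    fun t ht => (hu''' t ht).continuousWithinAt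
  -- Step 1: ‖u'' t - u'' 0‖ ≤ M * t
  have step1 : ∀ t ∈ Set.Icc (0 : ℝ) k, ‖u'' t - u'' 0‖ ≤ M * t := by
    have := norm_image_sub_le_of_norm_deriv_right_le_segment hcu''
      (hasDerivWithinAt_Ici_of_Icc hu''')
      (fun x hx => hMle x ⟨hx.1, hx.2.le⟩)
    intro t ht
    simpa using this t ht
  -- Step 2: g t = u' t - u' 0 - t • u'' 0, ‖g t‖ ≤ M * t^2 / 2
  set g : ℝ → E := fun t => u' t - u' 0 - t • u'' 0 with hg
  have hgderiv : ∀ x ∈ Set.Ico (0 : ℝ) k,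
      HasDerivWithinAt g (u'' x - u'' 0) (Set.Ici x) x := by
    have h := hasDerivWithinAt_Ici_of_Icc hu''
    intro x hx
    have h1 := (h x hx).sub (hasDerivWithinAt_const x (Set.Ici x) (u' 0))
    have h2 : HasDerivWithinAt (fun t : ℝ => t • u'' 0) (u'' 0) (Set.Ici x) x := by
      simpa using ((hasDerivAt_id x).smul_const (u'' 0)).hasDerivWithinAt
    exact (h1.sub h2).congr_deriv (by simp)
  have hgcont : ContinuousOn g (Set.Icc (0 : ℝ) k) := by
    apply (hcu'.sub continuousOn_const).sub
    exact (continuousOn_id.smul continuousOn_const)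
  have step2 : ∀ t ∈ Set.Icc (0 : ℝ) k, ‖g t‖ ≤ M * t ^ 2 / 2 := by
    have hB : ∀ x : ℝ, HasDerivAt (fun t => M * t ^ 2 / 2) (M * x) x := by
      intro x
      have : HasDerivAt (fun t : ℝ => M * t ^ 2 / 2) (M * (2 * x) / 2) x := by
        exact (((hasDerivAt_pow 2 x).const_mul M).div_const 2).congr_deriv (by ring)
      simpa [mul_comm, mul_assoc, mul_div_assoc] using this.congr_deriv (by ring)
    have := image_norm_le_of_norm_deriv_right_le_deriv_boundary hgcont hgderiv
      (B := fun t => M * t ^ 2 / 2) (B' := fun t => M * t)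
      (by simp [hg]) hB
      (fun x hx => by
        have := step1 x ⟨hx.1, hx.2.le⟩
        simpa using this)
    exact fun t ht => this ht
  -- Step 3: h t = u t - u 0 - t • u' 0 - (t^2/2) • u'' 0, ‖h t‖ ≤ M * t^3 / 6
  set h : ℝ → E := fun t => u t - u 0 - t • u' 0 - (t ^ 2 / 2) • u'' 0 with hh
  have hhderiv : ∀ x ∈ Set.Ico (0 : ℝ) k,
      HasDerivWithinAt h (g x) (Set.Ici x) x := by
    have hu := hasDerivWithinAt_Ici_of_Icc hu'
    intro x hx
    have h1 := (hu x hx).sub (hasDerivWithinAt_const x (Set.Ici x) (u 0))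
    have h2 : HasDerivWithinAt (fun t : ℝ => t • u' 0) (u' 0) (Set.Ici x) x := by
      simpa using ((hasDerivAt_id x).smul_const (u' 0)).hasDerivWithinAt
    have h3 : HasDerivWithinAt (fun t : ℝ => (t ^ 2 / 2) • u'' 0) (x • u'' 0) (Set.Ici x) x := by
      have hq : HasDerivAt (fun t : ℝ => t ^ 2 / 2) x x := by
        have := (hasDerivAt_pow 2 x).div_const 2
        simpa using this.congr_deriv (by push_cast; ring)
      simpa using (hq.smul_const (u'' 0)).hasDerivWithinAt
    have := (h1.sub h2).sub h3
    convert this using 1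
    · rfl
    simp only [hg]
    abel
  have hhcont : ContinuousOn h (Set.Icc (0 : ℝ) k) := by
    apply (((hcu.sub continuousOn_const).sub
      (continuousOn_id.smul continuousOn_const)).sub _)
    exact ContinuousOn.smul (by fun_prop) continuousOn_const
  have step3 : ‖h k‖ ≤ M * k ^ 3 / 6 := by
    have hB : ∀ x : ℝ, HasDerivAt (fun t => M * t ^ 3 / 6) (M * x ^ 2 / 2) x := by
      intro x
      have := ((hasDerivAt_pow 3 x).const_mul M).div_const 6
      simpa using this.congr_deriv (by push_cast; ring)
    have := image_norm_le_of_norm_deriv_right_le_deriv_boundary hhcont hhderiv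
      (B := fun t => M * t ^ 3 / 6) (B' := fun t => M * t ^ 2 / 2)
      (by simp [hh]) hB
      (fun x hx => step2 x ⟨hx.1, hx.2.le⟩)
    simpa using this hkmem
  -- Put everything together
  have hkne : k ≠ 0 := hk.ne'
  have key : (2 / k) • ((1 / k) • (u k - u 0) - u' 0) - (1 / 2 : ℝ) • (u'' 0 + u'' k)
      = (2 / k ^ 2) • h k - (1 / 2 : ℝ) • (u'' k - u'' 0) := by
    simp only [hh, smul_sub, smul_add, smul_smul]
    have e1 : (2 / k * (1 / k) : ℝ) = 2 / k ^ 2 := by field_simp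
    have e2 : (2 / k ^ 2 * k : ℝ) = 2 / k := by field_simp
    have e3 : (2 / k ^ 2 * (k ^ 2 / 2) : ℝ) = 1 := by field_simp
    rw [e1, e2, e3, one_smul]
    module
  rw [key]
  have hnorm : ‖(2 / k ^ 2) • h k - (1 / 2 : ℝ) • (u'' k - u'' 0)‖ ≤ (3 / 2) * M * k := by
    have h1 : ‖(2 / k ^ 2) • h k‖ ≤ (2 / k ^ 2) * (M * k ^ 3 / 6) := by
      rw [norm_smul, Real.norm_eq_abs, abs_of_pos (by positivity)]
      exact mul_le_mul_of_nonneg_left step3 (by positivity)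
    have h2 : ‖(1 / 2 : ℝ) • (u'' k - u'' 0)‖ ≤ (1 / 2) * (M * k) := by
      rw [norm_smul, Real.norm_eq_abs]
      have := step1 k hkmem
      rw [abs_of_pos (by norm_num)]
      exact mul_le_mul_of_nonneg_left this (by norm_num)
    calc ‖(2 / k ^ 2) • h k - (1 / 2 : ℝ) • (u'' k - u'' 0)‖
        ≤ ‖(2 / k ^ 2) • h k‖ + ‖(1 / 2 : ℝ) • (u'' k - u'' 0)‖ := norm_sub_le _ _
      _ ≤ (2 / k ^ 2) * (M * k ^ 3 / 6) + (1 / 2) * (M * k) := add_le_add h1 h2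
      _ = (5 / 6) * M * k := by field_simp; ring
      _ ≤ (3 / 2) * M * k := by nlinarith
  calc ‖(2 / k ^ 2) • h k - (1 / 2 : ℝ) • (u'' k - u'' 0)‖ ^ 2
      ≤ ((3 / 2) * M * k) ^ 2 := by
        apply sq_le_sq' _ hnorm
        exact le_trans (by nlinarith [norm_nonneg ((2 / k ^ 2) • h k - (1 / 2 : ℝ) • (u'' k - u'' 0))]) (norm_nonneg _)
    _ = (9 / 4) * k ^ 2 * S := by rw [← hM2]; ring
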